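/- Path lifting for Lipschitz quotients: let X be a proper metric space, Y a metric space, and F : X → Y a Lipschitz quotient with co-Lipschitz constant c > 0. If γ : [0,T] → Y is a 1-Lipschitz curve with γ(0) = F(x) for some x ∈ X, then there exists a (1/c)-Lipschitz curve γ̃ : [0,T] → X with γ̃(0) = x and F ∘ γ̃ = γ. -/

import Mathlib

open Metric Set
open scoped NNReal

/-- Path lifting for Lipschitz quotients: if `X` is a proper metric space and `F : X → Y` is a
Lipschitz quotient with co-Lipschitz constant `c > 0`, then every `1`-Lipschitz curve
`γ : [0,T] → Y` with `γ 0 = F x` lifts to a `(1/c)`-Lipschitz curve `γ̃ : [0,T] → X` with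
`γ̃ 0 = x` and `F ∘ γ̃ = γ`. -/
theorem lipschitz_quotient_path_lifting
    {X : Type*} {Y : Type*} [MetricSpace X] [ProperSpace X] [MetricSpace Y]
    (F : X → Y) (L : ℝ≥0) (hF : LipschitzWith L F)
    (c : ℝ≥0) (hc : 0 < c)
    (hco : ∀ (x : X) (r : ℝ), 0 < r → ball (F x) ((c : ℝ) * r) ⊆ F '' ball x r)
    (T : ℝ) (hT : 0 ≤ T) (γ : ℝ → Y) (hγ : LipschitzOnWith 1 γ (Icc 0 T))
    (x : X) (hx : γ 0 = F x) :
    ∃ γt : ℝ → X, LipschitzOnWith c⁻¹ γt (Icc 0 T) ∧ γt 0 = x ∧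
      ∀ t ∈ Icc (0 : ℝ) T, F (γt t) = γ t := by
  classical
  have hc' : (0:ℝ) < c := hc
  -- Step 1: exact point lifting.
  have step : ∀ (x₀ : X) (y : Y) (r : ℝ), 0 ≤ r → dist y (F x₀) ≤ (c:ℝ) * r →
      ∃ x', F x' = y ∧ dist x' x₀ ≤ r := by
    intro x₀ y r hr hd
    set K : ℕ → Set X := fun n => F ⁻¹' {y} ∩ closedBall x₀ (r + 1/(n+1)) with hK
    have hKne : ∀ n, (K n).Nonempty := by
      intro n
      have hpos : (0:ℝ) < r + 1/(n+1) := by positivity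
      have h1n : (0:ℝ) < 1/(n+1) := by positivity
      have hy : y ∈ ball (F x₀) ((c:ℝ) * (r + 1/(n+1))) := by
        rw [mem_ball]
        calc dist y (F x₀) ≤ (c:ℝ) * r := hd
          _ < (c:ℝ) * (r + 1/(n+1)) := by nlinarith
      obtain ⟨z, hz, hzy⟩ := hco x₀ _ hpos hy
      exact ⟨z, by simpa using hzy, ball_subset_closedBall hz⟩
    have hKcl : ∀ n, IsClosed (K n) := fun n =>
      (IsClosed.preimage hF.continuous isClosed_singleton).inter Metric.isClosed_closedBall
    have hKc : ∀ n, IsCompact (K n) := fun n =>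
      (isCompact_closedBall x₀ (r + 1/(n+1))).of_isClosed_subset (hKcl n)
        inter_subset_right
    have hanti : Antitone K := by
      intro m n hmn
      apply inter_subset_inter_right
      apply closedBall_subset_closedBall
      have : (1:ℝ)/(n+1) ≤ 1/(m+1) := by
        apply one_div_le_one_div_of_le (by positivity)
        exact_mod_cast Nat.succ_le_succ hmn
      linarith
    obtain ⟨x', hx'⟩ := IsCompact.nonempty_iInter_of_directed_nonempty_isCompact_isClosed
      K hanti.directed_ge hKne hKc hKcl
    simp only [mem_iInter, hK, mem_inter_iff, mem_preimage, mem_singleton_iff,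
      mem_closedBall] at hx'
    refine ⟨x', (hx' 0).1, ?_⟩
    refine le_of_forall_pos_le_add fun ε hε => ?_
    obtain ⟨n, hn⟩ := exists_nat_one_div_lt hε
    have := (hx' n).2
    linarith
  -- Step 2: lifting along a finite set of times.
  have chain : ∀ (n : ℕ) (S : Finset ℝ), S.card = n → ↑S ⊆ Icc 0 T → (0:ℝ) ∈ S →
      ∃ g : ℝ → X, g 0 = x ∧ (∀ t ∈ S, F (g t) = γ t) ∧
        ∀ s ∈ S, ∀ t ∈ S, s ≤ t → dist (g s) (g t) ≤ (t - s) / c := by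
    intro n
    induction n with
    | zero =>
      intro S hcard hsub h0
      rw [Finset.card_eq_zero] at hcard
      simp [hcard] at h0
    | succ n ih =>
      intro S hcard hsub h0
      rcases Nat.eq_zero_or_pos n with hn | hn
      · -- S = {0}
        have hS : S = {0} := by
          subst hn
          rw [Finset.card_eq_one] at hcard
          obtain ⟨a, ha⟩ := hcard
          rw [ha] at h0 ⊢
          simp at h0
          rw [h0]
        subst hS
        refine ⟨fun _ => x, rfl, ?_, ?_⟩
        · intro t ht
          simp at ht
          rw [ht, hx]
        · intro s hs t ht hst
          simp at hs ht
          subst hs; subst ht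
          simp
      · -- card S ≥ 2; peel off the maximum.
        have hne : S.Nonempty := ⟨0, h0⟩
        set b := S.max' hne with hb
        have hbS : b ∈ S := S.max'_mem hne
        have hble : ∀ s ∈ S, s ≤ b := fun s hs => S.le_max' s hs
        have hbpos : 0 < b := by
          by_contra h
          push_neg at h
          have hb0 : b = 0 := le_antisymm h (hsub hbS).1
          have : S ⊆ {0} := by
            intro a ha
            have h1 := hble a ha
            have h2 := (hsub ha).1
            simp only [Finset.mem_singleton]
            linarith [hb0 ▸ h1]
          have := Finset.card_le_card this
          simp at this
          omega
        set S' := S.erase b with hS'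
        have h0' : (0:ℝ) ∈ S' := Finset.mem_erase.mpr ⟨ne_of_lt hbpos, h0⟩
        have hcard' : S'.card = n := by
          rw [hS', Finset.card_erase_of_mem hbS, hcard]
          omega
        obtain ⟨g, hg0, hgF, hgd⟩ := ih S' hcard'
          (fun a ha => hsub (Finset.erase_subset _ _ ha)) h0'
        have hne' : S'.Nonempty := ⟨0, h0'⟩
        set m := S'.max' hne' with hm
        have hmS' : m ∈ S' := S'.max'_mem hne'
        have hmS : m ∈ S := Finset.erase_subset _ _ hmS'
        have hmle : ∀ s ∈ S', s ≤ m := fun s hs => S'.le_max' s hs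
        have hmb : m ≤ b := hble m hmS
        have hdist : dist (γ b) (F (g m)) ≤ (c:ℝ) * ((b - m) / c) := by
          rw [hgF m hmS']
          have := hγ.dist_le_mul b (hsub hbS) m (hsub hmS)
          rw [NNReal.coe_one, one_mul] at this
          calc dist (γ b) (γ m) ≤ dist b m := this
            _ = b - m := by rw [Real.dist_eq, abs_of_nonneg (by linarith)]
            _ = (c:ℝ) * ((b - m) / c) := by field_simp
        obtain ⟨xb, hxbF, hxbd⟩ := step (g m) (γ b) ((b - m)/c)
          (div_nonneg (by linarith) hc'.le) hdist
        refine ⟨Function.update g b xb, ?_, ?_, ?_⟩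
        · rw [Function.update_of_ne (ne_of_lt hbpos), hg0]
        · intro t ht
          rcases eq_or_ne t b with rfl | htb
          · rw [Function.update_self, hxbF]
          · rw [Function.update_of_ne htb]
            exact hgF t (Finset.mem_erase.mpr ⟨htb, ht⟩)
        · intro s hs t ht hst
          rcases eq_or_ne t b with rfl | htb
          · rcases eq_or_ne s b with rfl | hsb
            · rw [Function.update_self, dist_self, sub_self, zero_div]
            · have hsS' : s ∈ S' := Finset.mem_erase.mpr ⟨hsb, hs⟩
              have hsm : s ≤ m := hmle s hsS'
              rw [Function.update_of_ne hsb, Function.update_self]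
              calc dist (g s) xb ≤ dist (g s) (g m) + dist xb (g m) := dist_triangle_right _ _ _
                _ ≤ (m - s)/c + (b - m)/c := add_le_add (hgd s hsS' m hmS' hsm) hxbd
                _ = (b - s)/c := by ring
          · have htS' : t ∈ S' := Finset.mem_erase.mpr ⟨htb, ht⟩
            have hsb : s ≠ b := by
              intro h
              exact htb (le_antisymm (hble t ht) (h ▸ hst))
            have hsS' : s ∈ S' := Finset.mem_erase.mpr ⟨hsb, hs⟩
            rw [Function.update_of_ne hsb, Function.update_of_ne htb]
            exact hgd s hsS' t htS' hst
  -- Step 3: compactness / finite intersection property.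
  set A : Finset ℝ → Set (ℝ → X) := fun S =>
    (⋂ t : ℝ, {g : ℝ → X | g t ∈ closedBall x (T / c)}) ∩
    {g : ℝ → X | g 0 = x} ∩
    (⋂ t ∈ S, ⋂ (_ : t ∈ Icc 0 T), {g : ℝ → X | F (g t) = γ t}) ∩
    (⋂ s ∈ S, ⋂ t ∈ S, ⋂ (_ : s ∈ Icc 0 T), ⋂ (_ : t ∈ Icc 0 T), ⋂ (_ : s ≤ t),
      {g : ℝ → X | dist (g s) (g t) ≤ (t - s) / c}) with hA
  have hmemA : ∀ (S : Finset ℝ) (g : ℝ → X), g ∈ A S ↔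
      ((∀ t, g t ∈ closedBall x (T / c)) ∧ g 0 = x ∧
        (∀ t ∈ S, t ∈ Icc 0 T → F (g t) = γ t) ∧
        ∀ s ∈ S, ∀ t ∈ S, s ∈ Icc 0 T → t ∈ Icc 0 T → s ≤ t →
          dist (g s) (g t) ≤ (t - s) / c) := by
    intro S g
    simp only [hA, mem_inter_iff, mem_iInter, mem_setOf_eq]
    tauto
  have hAcl : ∀ S, IsClosed (A S) := by
    intro S
    refine (IsClosed.inter (IsClosed.inter ?_ ?_) ?_).inter ?_
    · exact isClosed_iInter fun t => Metric.isClosed_closedBall.preimage (continuous_apply t)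
    · exact isClosed_eq (continuous_apply 0) continuous_const
    · refine isClosed_iInter fun t => isClosed_iInter fun _ => isClosed_iInter fun _ => ?_
      exact isClosed_eq (hF.continuous.comp (continuous_apply t)) continuous_const
    · refine isClosed_iInter fun s => isClosed_iInter fun _ => isClosed_iInter fun t =>
        isClosed_iInter fun _ => isClosed_iInter fun _ => isClosed_iInter fun _ =>
        isClosed_iInter fun _ => ?_
      exact isClosed_le ((continuous_apply s).dist (continuous_apply t)) continuous_const
  have hAc : ∀ S, IsCompact (A S) := by
    intro S
    refine (isCompact_univ_pi fun _ : ℝ => isCompact_closedBall x (T / c)).of_isClosed_subset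
      (hAcl S) ?_
    intro g hg
    rw [mem_univ_pi]
    exact ((hmemA S g).mp hg).1
  have hAne : ∀ S, (A S).Nonempty := by
    intro S
    set S' : Finset ℝ := insert (0:ℝ) (S.filter (fun t => t ∈ Icc 0 T)) with hS'
    have hsub : ↑S' ⊆ Icc (0:ℝ) T := by
      intro a ha
      simp only [hS', Finset.coe_insert, Set.mem_insert_iff, Finset.coe_filter,
        Set.mem_setOf_eq] at ha
      rcases ha with rfl | ⟨_, h⟩
      · exact ⟨le_refl 0, hT⟩
      · exact h
    have h0' : (0:ℝ) ∈ S' := Finset.mem_insert_self _ _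
    obtain ⟨g, hg0, hgF, hgd⟩ := chain S'.card S' rfl hsub h0'
    have hmemS' : ∀ t ∈ S, t ∈ Icc 0 T → t ∈ S' := by
      intro t ht hIcc
      exact Finset.mem_insert_of_mem (Finset.mem_filter.mpr ⟨ht, hIcc⟩)
    refine ⟨fun t => if t ∈ S' then g t else x, (hmemA _ _).mpr ⟨?_, ?_, ?_, ?_⟩⟩
    · intro t
      rw [mem_closedBall]
      by_cases h : t ∈ S'
      · rw [if_pos h]
        have hd := hgd 0 h0' t h ((hsub h).1)
        rw [hg0] at hd
        have ht' := (hsub h).2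
        rw [dist_comm]
        calc dist x (g t) ≤ (t - 0) / c := hd
          _ ≤ T / c := by gcongr; linarith
      · rw [if_neg h, dist_self]
        positivity
    · rw [if_pos h0']
      exact hg0
    · intro t ht hIcc
      have h := hmemS' t ht hIcc
      rw [if_pos h]
      exact hgF t h
    · intro s hs t ht hsI htI hst
      have hs' := hmemS' s hs hsI
      have ht' := hmemS' t ht htI
      rw [if_pos hs', if_pos ht']
      exact hgd s hs' t ht' hst
  have hdir : Directed (· ⊇ ·) A := by
    have hmono : ∀ S S' : Finset ℝ, S ⊆ S' → A S' ⊆ A S := by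
      intro S S' hss g hg
      obtain ⟨h1, h2, h3, h4⟩ := (hmemA S' g).mp hg
      exact (hmemA S g).mpr ⟨h1, h2, fun t ht => h3 t (hss ht),
        fun s hs t ht => h4 s (hss hs) t (hss ht)⟩
    intro S S'
    exact ⟨S ∪ S', hmono _ _ Finset.subset_union_left,
      hmono _ _ Finset.subset_union_right⟩
  obtain ⟨g, hg⟩ := IsCompact.nonempty_iInter_of_directed_nonempty_isCompact_isClosed
    A hdir hAne hAc hAcl
  rw [mem_iInter] at hg
  have hgS : ∀ S : Finset ℝ, _ := fun S => (hmemA S g).mp (hg S)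
  refine ⟨g, ?_, (hgS ∅).2.1, ?_⟩
  · apply LipschitzOnWith.of_dist_le_mul
    intro s hs t ht
    rcases le_total s t with hst | hst
    · have hd := (hgS {s, t}).2.2.2 s (by simp) t (by simp) hs ht hst
      calc dist (g s) (g t) ≤ (t - s) / c := hd
        _ ≤ (c⁻¹ : ℝ≥0) * dist s t := by
          rw [NNReal.coe_inv, Real.dist_eq, abs_of_nonpos (by linarith : s - t ≤ 0)]
          rw [div_eq_inv_mul]
          ring_nf
          rfl
    · have hd := (hgS {s, t}).2.2.2 t (by simp) s (by simp) ht hs hst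
      rw [dist_comm (g s) (g t)]
      calc dist (g t) (g s) ≤ (s - t) / c := hd
        _ ≤ (c⁻¹ : ℝ≥0) * dist s t := by
          rw [NNReal.coe_inv, Real.dist_eq, abs_of_nonneg (by linarith : 0 ≤ s - t)]
          rw [div_eq_inv_mul]
  · intro t ht
    exact (hgS {t}).2.2.1 t (by simp) ht
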